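/- arXiv:2111.00529 — 2 statements merged into one kernel-verified Lean document; each statement's English description precedes it below -/
import Mathlib

section
/- Let p ≥ 3 and f ∈ H(L,α,β) with p(α+β) ≥ 1. Let (Y_k) be a Bernoulli-shift process with coupled versions Y_k^*, and suppose ‖Y_0‖_{p(α+β)} + Σ_{k∈ℕ} k² ‖Y_k − Y_k^*‖_{p(α+β)}^β < ∞. Then X_k = f(Y_k) − E f(Y_k) satisfies condition (A2): Σ_{k≥0} k² ϑ*_k(p) < ∞. -/
open MeasureTheory ProbabilityTheory Filter
open scoped ENNReal NNReal Topology

noncomputable section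

/-- The Bernoulli-shift process `X_k = g(ε_k, ε_{k-1}, …)`. -/
def shift {Ω : Type*} (g : (ℕ → ℝ) → ℝ) (ε : ℤ → Ω → ℝ) (k : ℤ) (ω : Ω) : ℝ :=
  g fun i => ε (k - i) ω

/-- The coupled version `X_k^{(l,*)} = g(ε_k, …, ε_{k-l+1}, ε'_{k-l}, ε'_{k-l-1}, …)`:
coordinates `i ≥ l` are replaced by the independent copy `ε'`. -/
def shiftStar {Ω : Type*} (g : (ℕ → ℝ) → ℝ) (ε ε' : ℤ → Ω → ℝ) (l : ℕ) (k : ℤ) (ω : Ω) : ℝ :=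
  g fun i => if i < l then ε (k - i) ω else ε' (k - i) ω

/-- `(ε_k)` together with the copy `(ε'_k)`: all coordinates are mutually independent and
identically distributed (so `(ε_k)` is i.i.d. and `(ε'_k)` is an independent copy). -/
def IIDPair {Ω : Type*} [MeasurableSpace Ω] (μ : Measure Ω) (ε ε' : ℤ → Ω → ℝ) : Prop :=
  (∀ k, Measurable (ε k)) ∧ (∀ k, Measurable (ε' k)) ∧
    iIndepFun (Sum.elim ε ε') μ ∧
    ∀ j j' : ℤ ⊕ ℤ, IdentDistrib (Sum.elim ε ε' j) (Sum.elim ε ε' j') μ μ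

/-- The dependence measure `ϑ*_l(p) = sup_k ‖X_k − X_k^{(l,*)}‖_p`. -/
def theta {Ω : Type*} [MeasurableSpace Ω] (μ : Measure Ω) (g : (ℕ → ℝ) → ℝ)
    (ε ε' : ℤ → Ω → ℝ) (p : ℝ) (l : ℕ) : ℝ≥0∞ :=
  ⨆ k : ℤ, eLpNorm (fun ω => shift g ε k ω - shiftStar g ε ε' l k ω) (ENNReal.ofReal p) μ

/-- The generalised Hölder class `H(L, α, β)`:
`|f(x) − f(y)| ≤ L |x−y|^β (1 + |x|^α + |y|^α)`. -/
def HolderClass (f : ℝ → ℝ) (L α β : ℝ) : Prop :=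
  0 ≤ α ∧ 0 < β ∧ 0 < L ∧
    ∀ x y : ℝ, |f x - f y| ≤ L * |x - y| ^ β * (1 + |x| ^ α + |y| ^ α)

section AuxLemmas

variable {Ω : Type*} [MeasurableSpace Ω] {μ : Measure Ω} [IsProbabilityMeasure μ]

/-- The finite-dimensional law of an i.i.d. family reindexed along an injection is the
product of copies of the common marginal. -/
lemma aux_map_eq_pi {J : Type*} (Z : J → Ω → ℝ) (hZ : ∀ j, Measurable (Z j))
    (hind : iIndepFun Z μ)
    (hid : ∀ j j', IdentDistrib (Z j) (Z j') μ μ) (j₀ : J)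
    {ι : Type*} [Fintype ι] (σ : ι → J) (hσ : Function.Injective σ) :
    Measure.map (fun ω (i : ι) => Z (σ i) ω) μ
      = Measure.pi (fun _ : ι => μ.map (Z j₀)) := by
  classical
  haveI : IsProbabilityMeasure (μ.map (Z j₀)) :=
    Measure.isProbabilityMeasure_map (hZ j₀).aemeasurable
  have hΦ : Measurable (fun ω (i : ι) => Z (σ i) ω) :=
    measurable_pi_lambda _ fun i => hZ _
  refine (Measure.pi_eq fun A hA => ?_).symm
  rw [Measure.map_apply hΦ (MeasurableSet.univ_pi hA)]
  set sets : J → Set ℝ := fun j => if h : ∃ i, σ i = j then A h.choose else Set.univ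
    with hsets
  have hkey : ∀ i, sets (σ i) = A i := by
    intro i
    have h : ∃ i', σ i' = σ i := ⟨i, rfl⟩
    simp only [hsets, dif_pos h]
    exact congrArg A (hσ h.choose_spec)
  have hpre : (fun ω (i : ι) => Z (σ i) ω) ⁻¹' Set.pi Set.univ A
      = ⋂ j ∈ Finset.univ.image σ, Z j ⁻¹' sets j := by
    rw [Finset.set_biInter_finset_image]
    ext ω
    simp only [Set.mem_preimage, Set.mem_pi, Set.mem_univ, forall_true_left, Set.mem_iInter,
      Finset.mem_univ, hkey]
  rw [hpre, hind.measure_inter_preimage_eq_mul _ (fun j hj => ?_)]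
  · rw [Finset.prod_image (fun a _ b _ h => hσ h)]
    refine Finset.prod_congr rfl fun i _ => ?_
    rw [hkey i, ← (hid (σ i) j₀).map_eq, Measure.map_apply (hZ (σ i)) (hA i)]
  · rcases Finset.mem_image.1 hj with ⟨i, _, rfl⟩
    rw [hkey i]; exact hA i

/-- The law of an i.i.d. family reindexed along an injection does not depend on the
injection. -/
lemma aux_map_seq_eq {J : Type*} (Z : J → Ω → ℝ) (hZ : ∀ j, Measurable (Z j))
    (hind : iIndepFun Z μ)
    (hid : ∀ j j', IdentDistrib (Z j) (Z j') μ μ) (j₀ : J)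
    {ι : Type*} (σ τ : ι → J) (hσ : Function.Injective σ) (hτ : Function.Injective τ) :
    Measure.map (fun ω (i : ι) => Z (σ i) ω) μ
      = Measure.map (fun ω (i : ι) => Z (τ i) ω) μ := by
  have hΦσ : Measurable (fun ω (i : ι) => Z (σ i) ω) :=
    measurable_pi_lambda _ fun i => hZ _
  have hΦτ : Measurable (fun ω (i : ι) => Z (τ i) ω) :=
    measurable_pi_lambda _ fun i => hZ _
  haveI : IsProbabilityMeasure (Measure.map (fun ω (i : ι) => Z (σ i) ω) μ) :=
    Measure.isProbabilityMeasure_map hΦσ.aemeasurable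
  haveI : IsProbabilityMeasure (Measure.map (fun ω (i : ι) => Z (τ i) ω) μ) :=
    Measure.isProbabilityMeasure_map hΦτ.aemeasurable
  apply ext_of_generate_finite (measurableCylinders fun _ : ι => ℝ)
    (generateFrom_measurableCylinders (α := fun _ : ι => ℝ)).symm
    (isPiSystem_measurableCylinders (α := fun _ : ι => ℝ))
    ?_ (by simp)
  intro s hs
  obtain ⟨I, S, hS, rfl⟩ := (mem_measurableCylinders _).1 hs
  have hcyl : MeasurableSet (cylinder (α := fun _ : ι => ℝ) I S) := hS.cylinder
  rw [Measure.map_apply hΦσ hcyl, Measure.map_apply hΦτ hcyl]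
  have h1 : (fun ω (i : ι) => Z (σ i) ω) ⁻¹' cylinder I S
      = (fun ω (i : I) => Z (σ i) ω) ⁻¹' S := rfl
  have h2 : (fun ω (i : ι) => Z (τ i) ω) ⁻¹' cylinder I S
      = (fun ω (i : I) => Z (τ i) ω) ⁻¹' S := rfl
  rw [h1, h2, ← Measure.map_apply (measurable_pi_lambda _ fun i => hZ _) hS,
    ← Measure.map_apply (measurable_pi_lambda _ fun i => hZ _) hS,
    aux_map_eq_pi Z hZ hind hid j₀ (fun i : I => σ i)
      (fun a b h => Subtype.coe_injective (hσ h)),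
    aux_map_eq_pi Z hZ hind hid j₀ (fun i : I => τ i)
      (fun a b h => Subtype.coe_injective (hτ h))]

/-- Functions of i.i.d. families along two injections are identically distributed. -/
lemma aux_identDistrib {J : Type*} (Z : J → Ω → ℝ) (hZ : ∀ j, Measurable (Z j))
    (hind : iIndepFun Z μ)
    (hid : ∀ j j', IdentDistrib (Z j) (Z j') μ μ) (j₀ : J)
    {ι : Type*} (σ τ : ι → J) (hσ : Function.Injective σ) (hτ : Function.Injective τ)
    (F : (ι → ℝ) → ℝ) (hF : Measurable F) :
    IdentDistrib (fun ω => F fun i => Z (σ i) ω) (fun ω => F fun i => Z (τ i) ω) μ μ := by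
  have hΦσ : Measurable (fun ω (i : ι) => Z (σ i) ω) :=
    measurable_pi_lambda _ fun i => hZ _
  have hΦτ : Measurable (fun ω (i : ι) => Z (τ i) ω) :=
    measurable_pi_lambda _ fun i => hZ _
  refine ⟨(hF.comp hΦσ).aemeasurable, (hF.comp hΦτ).aemeasurable, ?_⟩
  rw [show (fun ω => F fun i => Z (σ i) ω) = F ∘ (fun ω (i : ι) => Z (σ i) ω) from rfl,
    show (fun ω => F fun i => Z (τ i) ω) = F ∘ (fun ω (i : ι) => Z (τ i) ω) from rfl,
    ← Measure.map_map hF hΦσ, ← Measure.map_map hF hΦτ,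
    aux_map_seq_eq Z hZ hind hid j₀ σ τ hσ hτ]

/-- A function in a generalised Hölder class is continuous. -/
lemma holderClass_continuous {f : ℝ → ℝ} {L α β : ℝ} (hf : HolderClass f L α β) :
    Continuous f := by
  obtain ⟨hα, hβ, hL, hb⟩ := hf
  rw [continuous_iff_continuousAt]
  intro y
  have c1 : ContinuousAt (fun x : ℝ => |x - y| ^ β) y := by
    have h2 : ContinuousAt (fun x : ℝ => |x - y|) y :=
      (continuous_abs.comp (continuous_id.sub continuous_const)).continuousAt
    have h1 : ContinuousAt (fun t : ℝ => t ^ β) (|y - y|) := by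
      rw [sub_self, abs_zero]
      exact Real.continuousAt_rpow_const 0 β (Or.inr hβ.le)
    exact ContinuousAt.comp (g := fun t : ℝ => t ^ β) (f := fun x : ℝ => |x - y|) h1 h2
  have c2 : ContinuousAt (fun x : ℝ => 1 + |x| ^ α + |y| ^ α) y := by
    have h2 : ContinuousAt (fun x : ℝ => |x| ^ α) y :=
      (Real.continuousAt_rpow_const _ α (Or.inr hα)).comp continuous_abs.continuousAt
    exact (continuousAt_const.add h2).add continuousAt_const
  have hcont : Tendsto (fun x => L * |x - y| ^ β * (1 + |x| ^ α + |y| ^ α)) (𝓝 y) (𝓝 0) := by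
    have hca : ContinuousAt (fun x => L * |x - y| ^ β * (1 + |x| ^ α + |y| ^ α)) y :=
      (continuousAt_const.mul c1).mul c2
    have h0 : L * (0:ℝ) ^ β * (1 + |y| ^ α + |y| ^ α) = 0 := by
      rw [Real.zero_rpow hβ.ne']
      ring
    simpa [ContinuousAt, h0] using hca
  have h2 : Tendsto (fun x => |f x - f y|) (𝓝 y) (𝓝 0) :=
    squeeze_zero (fun x => abs_nonneg _) (fun x => hb x y) hcont
  have : Tendsto f (𝓝 y) (𝓝 (f y)) := by
    rw [tendsto_iff_norm_sub_tendsto_zero]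
    simpa [Real.norm_eq_abs] using h2
  exact this

end AuxLemmas

/-- Lemma `lem:hoelder`: if `f ∈ H(L,α,β)`, `p(α+β) ≥ 1`, and
`‖Y_0‖_{p(α+β)} + Σ_k k² ‖Y_k − Y_k^*‖_{p(α+β)}^β < ∞`, then `X_k = f(Y_k) − E f(Y_k)`
satisfies (A2): `Σ_k k² ϑ*_k(p) < ∞`. -/
theorem holder_transform_satisfies_A2
    {Ω : Type*} [MeasurableSpace Ω] (μ : Measure Ω) [IsProbabilityMeasure μ]
    (gY : (ℕ → ℝ) → ℝ) (hgY : Measurable gY) (ε ε' : ℤ → Ω → ℝ)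
    (hiid : IIDPair μ ε ε') (p L α β : ℝ) (hp : 3 ≤ p)
    (f : ℝ → ℝ) (hf : HolderClass f L α β) (hpab : 1 ≤ p * (α + β))
    (hY0 : eLpNorm (shift gY ε 0) (ENNReal.ofReal (p * (α + β))) μ < ⊤)
    (hYsum : (∑' k : ℕ, (k : ℝ≥0∞) ^ 2 *
        (eLpNorm (fun ω => shift gY ε k ω - shiftStar gY ε ε' k k ω)
          (ENNReal.ofReal (p * (α + β))) μ) ^ β) < ⊤) :
    (∑' l : ℕ, (l : ℝ≥0∞) ^ 2 *
        theta μ (fun u => f (gY u) - ∫ ω, f (shift gY ε 0 ω) ∂μ) ε ε' p l) < ⊤ := by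
  classical
  obtain ⟨hα, hβ, hL, hfb⟩ := hf
  obtain ⟨hε, hε', hind, hid⟩ := hiid
  have hfc : Continuous f := holderClass_continuous ⟨hα, hβ, hL, hfb⟩
  have hfm : Measurable f := hfc.measurable
  have hZ : ∀ j : ℤ ⊕ ℤ, Measurable (Sum.elim ε ε' j) := by
    rintro (j | j)
    exacts [hε j, hε' j]
  have hp0 : (0:ℝ) < p := by linarith
  have hab : (0:ℝ) < α + β := by linarith
  set q : ℝ := p * (α + β) with hqdef
  have hq0 : (0:ℝ) < q := by positivity
  have hinj : ∀ k : ℤ, Function.Injective (fun i : ℕ => k - (i:ℤ)) := by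
    intro k a b h
    simp only at h
    omega
  -- the common marginal norm
  have hNne : eLpNorm (shift gY ε 0) (ENNReal.ofReal q) μ ≠ ⊤ := hY0.ne
  set N : ℝ≥0∞ := eLpNorm (shift gY ε 0) (ENNReal.ofReal q) μ with hNdef
  set K : ℝ≥0∞ := 1 + N ^ α + N ^ α with hKdef
  have hKne : K ≠ ⊤ := by
    have h1 : N ^ α ≠ ⊤ := ENNReal.rpow_ne_top_of_nonneg hα hNne
    simp [hKdef, ENNReal.add_ne_top, h1]
  set C : ℝ≥0∞ := (‖L‖₊ : ℝ≥0∞) * K with hCdef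
  have hCne : C ≠ ⊤ := ENNReal.mul_ne_top ENNReal.coe_ne_top hKne
  -- measurability of the processes
  have hYm : ∀ k : ℤ, Measurable (shift gY ε k) := fun k =>
    hgY.comp (measurable_pi_lambda _ fun i => hε _)
  have hYsm : ∀ (l : ℕ) (k : ℤ), Measurable (shiftStar gY ε ε' l k) := by
    intro l k
    refine hgY.comp (measurable_pi_lambda _ fun i => ?_)
    by_cases h : i < l <;> simp only [shiftStar, h, if_true, if_false]
    exacts [hε _, hε' _]
  -- the key per-`l` bound
  have key : ∀ l : ℕ, theta μ (fun u => f (gY u) - ∫ ω, f (shift gY ε 0 ω) ∂μ) ε ε' p l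
      ≤ C * (eLpNorm (fun ω => shift gY ε l ω - shiftStar gY ε ε' l l ω)
          (ENNReal.ofReal q) μ) ^ β := by
    intro l
    -- stationarity: reduce the supremum over `k` to `k = l`
    have hσinj : ∀ k : ℤ, Function.Injective
        (fun s : ℕ ⊕ ℕ => Sum.map (fun i : ℕ => k - (i:ℤ)) (fun i : ℕ => k - (i:ℤ)) s) :=
      fun k => Function.Injective.sumMap (hinj k) (hinj k)
    have hF₁m : Measurable (fun u : (ℕ ⊕ ℕ) → ℝ =>
        f (gY fun i => u (Sum.inl i)) -
          f (gY fun i => if i < l then u (Sum.inl i) else u (Sum.inr i))) := by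
      refine Measurable.sub ?_ ?_
      · exact hfm.comp (hgY.comp (measurable_pi_lambda _ fun i => measurable_pi_apply _))
      · refine hfm.comp (hgY.comp (measurable_pi_lambda _ fun i => ?_))
        by_cases h : i < l <;> simp only [h, if_true, if_false] <;>
          exact measurable_pi_apply _
    have hIdent : ∀ k : ℤ,
        IdentDistrib (fun ω => f (shift gY ε k ω) - f (shiftStar gY ε ε' l k ω))
          (fun ω => f (shift gY ε l ω) - f (shiftStar gY ε ε' l l ω)) μ μ := by
      intro k
      exact aux_identDistrib (Sum.elim ε ε') hZ hind hid (Sum.inl 0)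
        (fun s : ℕ ⊕ ℕ => Sum.map (fun i : ℕ => k - (i:ℤ)) (fun i : ℕ => k - (i:ℤ)) s)
        (fun s : ℕ ⊕ ℕ => Sum.map (fun i : ℕ => (l:ℤ) - (i:ℤ)) (fun i : ℕ => (l:ℤ) - (i:ℤ)) s)
        (hσinj k) (hσinj l)
        (fun u => f (gY fun i => u (Sum.inl i)) -
          f (gY fun i => if i < l then u (Sum.inl i) else u (Sum.inr i))) hF₁m
    have hth : theta μ (fun u => f (gY u) - ∫ ω, f (shift gY ε 0 ω) ∂μ) ε ε' p l
        = eLpNorm (fun ω => f (shift gY ε (l:ℤ) ω) - f (shiftStar gY ε ε' l (l:ℤ) ω))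
            (ENNReal.ofReal p) μ := by
      simp only [theta]
      have h1 : ∀ k : ℤ,
          eLpNorm (fun ω => shift (fun u => f (gY u) - ∫ ω, f (shift gY ε 0 ω) ∂μ) ε k ω -
            shiftStar (fun u => f (gY u) - ∫ ω, f (shift gY ε 0 ω) ∂μ) ε ε' l k ω)
              (ENNReal.ofReal p) μ
          = eLpNorm (fun ω => f (shift gY ε k ω) - f (shiftStar gY ε ε' l k ω))
              (ENNReal.ofReal p) μ := by
        intro k
        apply eLpNorm_congr_ae
        filter_upwards with ω
        show (f (shift gY ε k ω) - _) - (f (shiftStar gY ε ε' l k ω) - _) = _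
        ring
      calc (⨆ k : ℤ, eLpNorm (fun ω =>
              shift (fun u => f (gY u) - ∫ ω, f (shift gY ε 0 ω) ∂μ) ε k ω -
              shiftStar (fun u => f (gY u) - ∫ ω, f (shift gY ε 0 ω) ∂μ) ε ε' l k ω)
              (ENNReal.ofReal p) μ)
          = ⨆ _ : ℤ, eLpNorm
              (fun ω => f (shift gY ε (l:ℤ) ω) - f (shiftStar gY ε ε' l (l:ℤ) ω))
              (ENNReal.ofReal p) μ :=
            iSup_congr fun k => (h1 k).trans ((hIdent k).eLpNorm_eq _)
        _ = _ := iSup_const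
    rw [hth]
    -- identically distributed marginals at exponent `q`
    have hYl : eLpNorm (shift gY ε (l:ℤ)) (ENNReal.ofReal q) μ = N := by
      have h := aux_identDistrib (Sum.elim ε ε') hZ hind hid (Sum.inl 0)
        (fun i : ℕ => Sum.inl ((l:ℤ) - i)) (fun i : ℕ => Sum.inl ((0:ℤ) - i))
        (fun a b h => hinj (l:ℤ) (Sum.inl_injective h))
        (fun a b h => hinj (0:ℤ) (Sum.inl_injective h)) gY hgY
      exact h.eLpNorm_eq _
    have hYsl : eLpNorm (shiftStar gY ε ε' l (l:ℤ)) (ENNReal.ofReal q) μ = N := by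
      have hρ : Function.Injective (fun i : ℕ =>
          if i < l then Sum.inl ((l:ℤ) - i) else Sum.inr ((l:ℤ) - i)) := by
        intro a b hab
        by_cases h1 : a < l <;> by_cases h2 : b < l <;>
          simp only [h1, h2, if_true, if_false, Sum.inl.injEq, Sum.inr.injEq,
            reduceCtorEq] at hab <;> omega
      have h := aux_identDistrib (Sum.elim ε ε') hZ hind hid (Sum.inl 0)
        (fun i : ℕ => if i < l then Sum.inl ((l:ℤ) - i) else Sum.inr ((l:ℤ) - i))
        (fun i : ℕ => Sum.inl ((0:ℤ) - i)) hρ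
        (fun a b h => hinj (0:ℤ) (Sum.inl_injective h)) gY hgY
      have he : (fun ω => gY fun i => Sum.elim ε ε'
          (if i < l then Sum.inl ((l:ℤ) - i) else Sum.inr ((l:ℤ) - i)) ω)
          = shiftStar gY ε ε' l (l:ℤ) := by
        funext ω
        show gY _ = gY _
        congr 1
        funext i
        by_cases h : i < l <;> simp [h]
      rw [← he]
      exact h.eLpNorm_eq _
    -- notation for the difference and the weight
    have hYmm : Measurable (shift gY ε (l:ℤ)) := hYm _
    have hYsmm : Measurable (shiftStar gY ε ε' l (l:ℤ)) := hYsm _ _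
    have hΔm : Measurable (fun ω => shift gY ε (l:ℤ) ω - shiftStar gY ε ε' l (l:ℤ) ω) :=
      hYmm.sub hYsmm
    have habsm : Measurable (fun ω =>
        |shift gY ε (l:ℤ) ω - shiftStar gY ε ε' l (l:ℤ) ω| ^ β) :=
      hΔm.abs.pow measurable_const
    have hGm : Measurable (fun ω =>
        1 + |shift gY ε (l:ℤ) ω| ^ α + |shiftStar gY ε ε' l (l:ℤ) ω| ^ α) :=
      (measurable_const.add (hYmm.abs.pow measurable_const)).add
        (hYsmm.abs.pow measurable_const)
    -- choice of the second Hölder exponent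
    obtain ⟨r, hexp, hGle⟩ : ∃ r : ℝ≥0∞,
        1 / ENNReal.ofReal p = 1 / ENNReal.ofReal (q / β) + 1 / r ∧
        eLpNorm (fun ω =>
          1 + |shift gY ε (l:ℤ) ω| ^ α + |shiftStar gY ε ε' l (l:ℤ) ω| ^ α) r μ ≤ K := by
      rcases hα.eq_or_lt with hα0 | hα0
      · refine ⟨⊤, ?_, ?_⟩
        · have hqβ : q / β = p := by
            rw [hqdef, ← hα0, zero_add, mul_div_assoc, div_self hβ.ne', mul_one]
          simp [hqβ]
        · have hG3 : (fun ω =>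
              1 + |shift gY ε (l:ℤ) ω| ^ α + |shiftStar gY ε ε' l (l:ℤ) ω| ^ α)
              = fun _ => (3:ℝ) := by
            funext ω
            rw [← hα0]
            simp [Real.rpow_zero]
            norm_num
          rw [hG3, eLpNorm_const _ (by simp) (IsProbabilityMeasure.ne_zero μ)]
          have h3 : (‖(3:ℝ)‖₊ : ℝ≥0∞) = 3 := by
            norm_num
          rw [hKdef, ← hα0]
          simp [h3, measure_univ, ENNReal.rpow_zero]
          norm_num
          have h3' : ‖(3:ℝ)‖ₑ = 3 := by simpa using Real.enorm_natCast 3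
          exact h3'.le
      · refine ⟨ENNReal.ofReal (q / α), ?_, ?_⟩
        · rw [one_div, one_div, one_div, ← ENNReal.ofReal_inv_of_pos hp0,
            ← ENNReal.ofReal_inv_of_pos (by positivity),
            ← ENNReal.ofReal_inv_of_pos (by positivity),
            ← ENNReal.ofReal_add (by positivity) (by positivity)]
          congr 1
          rw [hqdef]
          field_simp
          ring
        · have hr1 : (1:ℝ≥0∞) ≤ ENNReal.ofReal (q / α) := by
            rw [ENNReal.one_le_ofReal, le_div_iff₀ hα0]
            nlinarith
          have hrne : ENNReal.ofReal (q / α) ≠ 0 := by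
            intro h
            rw [h] at hr1
            simp at hr1
          have hsplit : (fun ω =>
              1 + |shift gY ε (l:ℤ) ω| ^ α + |shiftStar gY ε ε' l (l:ℤ) ω| ^ α)
              = ((fun _ => (1:ℝ)) + fun ω => |shift gY ε (l:ℤ) ω| ^ α)
                + fun ω => |shiftStar gY ε ε' l (l:ℤ) ω| ^ α := rfl
          have hmul : ENNReal.ofReal (q / α) * ENNReal.ofReal α = ENNReal.ofReal q := by
            rw [← ENNReal.ofReal_mul (by positivity), div_mul_cancel₀ _ hα0.ne']
          have hnorm1 : eLpNorm (fun _ : Ω => (1:ℝ)) (ENNReal.ofReal (q / α)) μ = 1 := by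
            rw [eLpNorm_const _ hrne (IsProbabilityMeasure.ne_zero μ)]
            simp [measure_univ]
          have hnormY : eLpNorm (fun ω => |shift gY ε (l:ℤ) ω| ^ α)
              (ENNReal.ofReal (q / α)) μ = N ^ α := by
            have : (fun ω => |shift gY ε (l:ℤ) ω| ^ α)
                = fun ω => ‖shift gY ε (l:ℤ) ω‖ ^ α := by
              funext ω; rw [Real.norm_eq_abs]
            rw [this, eLpNorm_norm_rpow _ hα0, hmul, hYl]
          have hnormYs : eLpNorm (fun ω => |shiftStar gY ε ε' l (l:ℤ) ω| ^ α)
              (ENNReal.ofReal (q / α)) μ = N ^ α := by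
            have : (fun ω => |shiftStar gY ε ε' l (l:ℤ) ω| ^ α)
                = fun ω => ‖shiftStar gY ε ε' l (l:ℤ) ω‖ ^ α := by
              funext ω; rw [Real.norm_eq_abs]
            rw [this, eLpNorm_norm_rpow _ hα0, hmul, hYsl]
          rw [hsplit]
          refine le_trans (eLpNorm_add_le ((aestronglyMeasurable_const.add
            (hYmm.abs.pow measurable_const).aestronglyMeasurable))
            (hYsmm.abs.pow measurable_const).aestronglyMeasurable hr1) ?_
          refine le_trans (add_le_add_left (eLpNorm_add_le aestronglyMeasurable_const
            (hYmm.abs.pow measurable_const).aestronglyMeasurable hr1) _) ?_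
          rw [hnorm1, hnormY, hnormYs, hKdef]
    -- Hölder's inequality
    have step1 : eLpNorm (fun ω => f (shift gY ε (l:ℤ) ω) - f (shiftStar gY ε ε' l (l:ℤ) ω))
        (ENNReal.ofReal p) μ
        ≤ eLpNorm (fun ω => L * (|shift gY ε (l:ℤ) ω - shiftStar gY ε ε' l (l:ℤ) ω| ^ β *
            (1 + |shift gY ε (l:ℤ) ω| ^ α + |shiftStar gY ε ε' l (l:ℤ) ω| ^ α)))
            (ENNReal.ofReal p) μ := by
      apply eLpNorm_mono
      intro ω
      rw [Real.norm_eq_abs, Real.norm_eq_abs]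
      calc |f (shift gY ε (l:ℤ) ω) - f (shiftStar gY ε ε' l (l:ℤ) ω)|
          ≤ L * |shift gY ε (l:ℤ) ω - shiftStar gY ε ε' l (l:ℤ) ω| ^ β *
            (1 + |shift gY ε (l:ℤ) ω| ^ α + |shiftStar gY ε ε' l (l:ℤ) ω| ^ α) := hfb _ _
        _ = L * (|shift gY ε (l:ℤ) ω - shiftStar gY ε ε' l (l:ℤ) ω| ^ β *
            (1 + |shift gY ε (l:ℤ) ω| ^ α + |shiftStar gY ε ε' l (l:ℤ) ω| ^ α)) := by ring
        _ ≤ |L * (|shift gY ε (l:ℤ) ω - shiftStar gY ε ε' l (l:ℤ) ω| ^ β *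
            (1 + |shift gY ε (l:ℤ) ω| ^ α + |shiftStar gY ε ε' l (l:ℤ) ω| ^ α))| :=
          le_abs_self _
    have step2 : eLpNorm (fun ω => L *
        (|shift gY ε (l:ℤ) ω - shiftStar gY ε ε' l (l:ℤ) ω| ^ β *
          (1 + |shift gY ε (l:ℤ) ω| ^ α + |shiftStar gY ε ε' l (l:ℤ) ω| ^ α)))
          (ENNReal.ofReal p) μ
        = (‖L‖₊ : ℝ≥0∞) * eLpNorm (fun ω =>
            |shift gY ε (l:ℤ) ω - shiftStar gY ε ε' l (l:ℤ) ω| ^ β *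
            (1 + |shift gY ε (l:ℤ) ω| ^ α + |shiftStar gY ε ε' l (l:ℤ) ω| ^ α))
            (ENNReal.ofReal p) μ := by
      have h := eLpNorm_const_smul (𝕜 := ℝ) L
        (fun ω => |shift gY ε (l:ℤ) ω - shiftStar gY ε ε' l (l:ℤ) ω| ^ β *
          (1 + |shift gY ε (l:ℤ) ω| ^ α + |shiftStar gY ε ε' l (l:ℤ) ω| ^ α))
        (ENNReal.ofReal p) μ
      rw [enorm_eq_nnnorm] at h
      exact h
    have step3 : eLpNorm (fun ω =>
        |shift gY ε (l:ℤ) ω - shiftStar gY ε ε' l (l:ℤ) ω| ^ β *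
          (1 + |shift gY ε (l:ℤ) ω| ^ α + |shiftStar gY ε ε' l (l:ℤ) ω| ^ α))
          (ENNReal.ofReal p) μ
        ≤ eLpNorm (fun ω => |shift gY ε (l:ℤ) ω - shiftStar gY ε ε' l (l:ℤ) ω| ^ β)
            (ENNReal.ofReal (q / β)) μ *
          eLpNorm (fun ω =>
            1 + |shift gY ε (l:ℤ) ω| ^ α + |shiftStar gY ε ε' l (l:ℤ) ω| ^ α) r μ := by
      haveI : ENNReal.HolderTriple (ENNReal.ofReal (q / β)) r (ENNReal.ofReal p) :=
        ⟨by simpa only [one_div] using hexp.symm⟩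
      refine le_of_le_of_eq (eLpNorm_le_eLpNorm_mul_eLpNorm'_of_norm habsm.aestronglyMeasurable
        hGm.aestronglyMeasurable (· * ·) 1 ?_) (by rw [ENNReal.coe_one, one_mul])
      filter_upwards with ω
      rw [Real.norm_eq_abs, Real.norm_eq_abs, Real.norm_eq_abs, abs_mul, NNReal.coe_one, one_mul]
    have step4 : eLpNorm (fun ω =>
        |shift gY ε (l:ℤ) ω - shiftStar gY ε ε' l (l:ℤ) ω| ^ β) (ENNReal.ofReal (q / β)) μ
        = (eLpNorm (fun ω => shift gY ε (l:ℤ) ω - shiftStar gY ε ε' l (l:ℤ) ω)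
            (ENNReal.ofReal q) μ) ^ β := by
      have hrw : (fun ω => |shift gY ε (l:ℤ) ω - shiftStar gY ε ε' l (l:ℤ) ω| ^ β)
          = fun ω => ‖shift gY ε (l:ℤ) ω - shiftStar gY ε ε' l (l:ℤ) ω‖ ^ β := by
        funext ω; rw [Real.norm_eq_abs]
      rw [hrw, eLpNorm_norm_rpow _ hβ]
      congr 2
      rw [← ENNReal.ofReal_mul (by positivity), div_mul_cancel₀ _ hβ.ne']
    calc eLpNorm (fun ω => f (shift gY ε (l:ℤ) ω) - f (shiftStar gY ε ε' l (l:ℤ) ω))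
          (ENNReal.ofReal p) μ
        ≤ (‖L‖₊ : ℝ≥0∞) * eLpNorm (fun ω =>
            |shift gY ε (l:ℤ) ω - shiftStar gY ε ε' l (l:ℤ) ω| ^ β *
            (1 + |shift gY ε (l:ℤ) ω| ^ α + |shiftStar gY ε ε' l (l:ℤ) ω| ^ α))
            (ENNReal.ofReal p) μ := step2 ▸ step1
      _ ≤ (‖L‖₊ : ℝ≥0∞) *
          ((eLpNorm (fun ω => shift gY ε (l:ℤ) ω - shiftStar gY ε ε' l (l:ℤ) ω)
            (ENNReal.ofReal q) μ) ^ β * K) := by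
          refine mul_le_mul_right (le_trans step3 ?_) _
          rw [step4]
          exact mul_le_mul_right hGle _
      _ = C * (eLpNorm (fun ω => shift gY ε (l:ℤ) ω - shiftStar gY ε ε' l (l:ℤ) ω)
            (ENNReal.ofReal q) μ) ^ β := by
          rw [hCdef]; ring
  -- summation
  calc (∑' l : ℕ, (l : ℝ≥0∞) ^ 2 *
        theta μ (fun u => f (gY u) - ∫ ω, f (shift gY ε 0 ω) ∂μ) ε ε' p l)
      ≤ ∑' l : ℕ, (l : ℝ≥0∞) ^ 2 *
          (C * (eLpNorm (fun ω => shift gY ε l ω - shiftStar gY ε ε' l l ω)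
            (ENNReal.ofReal q) μ) ^ β) :=
        ENNReal.tsum_le_tsum fun l => mul_le_mul_right (key l) _
    _ = C * ∑' l : ℕ, (l : ℝ≥0∞) ^ 2 *
          (eLpNorm (fun ω => shift gY ε l ω - shiftStar gY ε ε' l l ω)
            (ENNReal.ofReal q) μ) ^ β := by
        rw [← ENNReal.tsum_mul_left]
        exact tsum_congr fun l => by ring
    _ < ⊤ := ENNReal.mul_lt_top hCne.lt_top hYsum

end
end

section
/- Let V_k = Σ_{i=1}^∞ Σ_{0≤j_1<…<j_i} a(j_1,…,j_i) ε_{k−j_1} ⋯ ε_{k−j_i} be a Volterra process with i.i.d. innovations (ε_k) satisfying ‖ε_0‖_p < ∞ for some p > 3, and let V_k^* denote the coupled version in which ε_j is replaced by ε'_j for all j ≤ 0. Then there exists a constant C such that ‖V_k − V_k^*‖_p ≤ C Σ_{i=1}^∞ ‖ε_0‖_p^i Σ_{l≥k} A_{l,i}, whenever the right-hand side is finite. -/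
open MeasureTheory ProbabilityTheory
open scoped ENNReal NNReal

noncomputable section

/-- The Volterra process
`V_k = Σ_{i≥1} Σ_{0≤j_1<…<j_i} a(j_1,…,j_i) ε_{k-j_1} ⋯ ε_{k-j_i}` (here the kernel of
order `i+1` is `a i`, indexed by strictly increasing tuples `j : Fin (i+1) → ℕ`). -/
def volterra {Ω : Type*} (a : (i : ℕ) → (Fin (i + 1) → ℕ) → ℝ) (ε : ℤ → Ω → ℝ)
    (k : ℤ) (ω : Ω) : ℝ :=
  ∑' (i : ℕ) (j : Fin (i + 1) → ℕ),
    if StrictMono j then a i j * ∏ t, ε (k - j t) ω else 0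

/-- The coupled version `V_k^*`: every `ε_m` with `m ≤ 0` is replaced by `ε'_m`. -/
def volterraStar {Ω : Type*} (a : (i : ℕ) → (Fin (i + 1) → ℕ) → ℝ) (ε ε' : ℤ → Ω → ℝ)
    (k : ℤ) (ω : Ω) : ℝ :=
  ∑' (i : ℕ) (j : Fin (i + 1) → ℕ),
    if StrictMono j then
      a i j * ∏ t, (if k - (j t : ℤ) ≤ 0 then ε' (k - j t) ω else ε (k - j t) ω) else 0

/-- `A_{k,i}`: the sum of `|a(j_1,…,j_i)|` over all strictly increasing tuples containing `k`. -/
def Avol (a : (i : ℕ) → (Fin (i + 1) → ℕ) → ℝ) (k i : ℕ) : ℝ≥0∞ :=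
  ∑' j : Fin (i + 1) → ℕ,
    if StrictMono j ∧ ∃ t, j t = k then ENNReal.ofReal |a i j| else 0

private lemma fin_strictMono_le {n : ℕ} {j : Fin (n + 1) → ℕ} (h : StrictMono j)
    (t : Fin (n + 1)) : (t : ℕ) ≤ j t := by
  induction t using Fin.induction with
  | zero => exact Nat.zero_le _
  | succ t ih =>
    have h1 : j t.castSucc < j t.succ := h (Fin.castSucc_lt_succ (i := t))
    have h2 : (t.castSucc : ℕ) = (t : ℕ) := rfl
    have h3 : (t.succ : ℕ) = (t : ℕ) + 1 := rfl
    omega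

private lemma lintegral_finset_prod_indep {Ω : Type*} [MeasurableSpace Ω] {μ : Measure Ω}
    [IsProbabilityMeasure μ] {ι : Type*} (g : ι → Ω → ℝ≥0∞)
    (hindep : iIndepFun g μ) (hmeas : ∀ i, Measurable (g i))
    (s : Finset ι) :
    ∫⁻ ω, ∏ t ∈ s, g t ω ∂μ = ∏ t ∈ s, ∫⁻ ω, g t ω ∂μ := by
  classical
  induction s using Finset.cons_induction with
  | empty => simp
  | cons i s hi ih =>
    have hInd : IndepFun (g i) (∏ j ∈ s, g j) μ :=
      (hindep.indepFun_finsetProd_of_notMem hmeas hi).symm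
    have hprodfn : (∏ j ∈ s, g j) = fun ω => ∏ j ∈ s, g j ω := by
      funext ω; simp
    have hprod : Measurable (∏ j ∈ s, g j) := by
      rw [hprodfn]; exact Finset.measurable_prod s fun j _ => hmeas j
    have h := lintegral_mul_eq_lintegral_mul_lintegral_of_indepFun (hmeas i) hprod hInd
    simp only [Pi.mul_apply, hprodfn] at h
    rw [Finset.prod_cons]
    calc ∫⁻ ω, ∏ t ∈ Finset.cons i s hi, g t ω ∂μ
        = ∫⁻ ω, g i ω * ∏ t ∈ s, g t ω ∂μ := by simp only [Finset.prod_cons]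
      _ = (∫⁻ ω, g i ω ∂μ) * ∫⁻ ω, ∏ t ∈ s, g t ω ∂μ := h
      _ = _ := by rw [ih]

private lemma eLpNorm_prod_coords {Ω : Type*} [MeasurableSpace Ω] {μ : Measure Ω}
    [IsProbabilityMeasure μ] (f : (ℤ ⊕ ℤ) → Ω → ℝ)
    (hindep : iIndepFun f μ) (hmeas : ∀ i, Measurable (f i))
    (hid : ∀ j j', IdentDistrib (f j) (f j') μ μ)
    {q : ℝ} (hq : 0 < q) {n : ℕ} (m : Fin n → ℤ ⊕ ℤ) (hm : Function.Injective m) :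
    eLpNorm (fun ω => ∏ t, f (m t) ω) (ENNReal.ofReal q) μ
      = (eLpNorm (f (Sum.inl 0)) (ENNReal.ofReal q) μ) ^ n := by
  classical
  have hP0 : ENNReal.ofReal q ≠ 0 := (ENNReal.ofReal_pos.mpr hq).ne'
  have hPt : ENNReal.ofReal q ≠ ⊤ := ENNReal.ofReal_ne_top
  have htr : (ENNReal.ofReal q).toReal = q := ENNReal.toReal_ofReal hq.le
  set g : (ℤ ⊕ ℤ) → Ω → ℝ≥0∞ := fun j ω => (‖f j ω‖₊ : ℝ≥0∞) ^ q with hg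
  have hmap : Measurable fun x : ℝ => ((‖x‖₊ : ℝ≥0∞)) ^ q :=
    ENNReal.continuous_rpow_const.measurable.comp measurable_nnnorm.coe_nnreal_ennreal
  have hgmeas : ∀ j, Measurable (g j) := fun j => hmap.comp (hmeas j)
  have hgindep : iIndepFun g μ :=
    hindep.comp (fun _ (x : ℝ) => ((‖x‖₊ : ℝ≥0∞)) ^ q) (fun _ => hmap)
  have hI : ∀ j, ∫⁻ ω, g j ω ∂μ = ∫⁻ ω, g (Sum.inl 0) ω ∂μ := fun j =>
    ((hid j (Sum.inl 0)).comp hmap).lintegral_eq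
  rw [eLpNorm_eq_lintegral_rpow_enorm_toReal hP0 hPt, eLpNorm_eq_lintegral_rpow_enorm_toReal hP0 hPt]
  simp only [htr, enorm_eq_nnnorm]
  have key : ∫⁻ ω, (‖∏ t, f (m t) ω‖₊ : ℝ≥0∞) ^ q ∂μ
      = (∫⁻ ω, (‖f (Sum.inl 0) ω‖₊ : ℝ≥0∞) ^ q ∂μ) ^ (n : ℕ) := by
    have h1 : ∀ ω, (‖∏ t, f (m t) ω‖₊ : ℝ≥0∞) ^ q = ∏ j ∈ Finset.univ.image m, g j ω := by
      intro ω
      rw [nnnorm_prod, ENNReal.coe_finset_prod, ← ENNReal.prod_rpow_of_nonneg hq.le,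
        Finset.prod_image (fun x _ y _ h => hm h)]
    simp only [h1]
    rw [lintegral_finset_prod_indep g hgindep hgmeas,
      Finset.prod_congr rfl (fun j _ => hI j), Finset.prod_const,
      Finset.card_image_of_injective _ hm, Finset.card_univ, Fintype.card_fin]
  rw [key, ← ENNReal.rpow_natCast (∫⁻ ω, (‖f (Sum.inl 0) ω‖₊ : ℝ≥0∞) ^ q ∂μ) n,
    ← ENNReal.rpow_natCast (_ ^ (1 / q)) n, ← ENNReal.rpow_mul, ← ENNReal.rpow_mul,
    mul_comm]

private lemma eLpNorm_tsum_le_tsum_eLpNorm {Ω : Type*} [MeasurableSpace Ω] {μ : Measure Ω}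
    {κ : Type*} [Countable κ] {q : ℝ≥0∞} (hq : 1 ≤ q) (f : κ → Ω → ℝ)
    (hm : ∀ x, AEStronglyMeasurable (f x) μ)
    (hsum : ∀ᵐ ω ∂μ, Summable fun x => f x ω) :
    eLpNorm (fun ω => ∑' x, f x ω) q μ ≤ ∑' x, eLpNorm (f x) q μ := by
  classical
  cases isEmpty_or_nonempty κ with
  | inl h => simp [tsum_empty]
  | inr h =>
    obtain ⟨e, he⟩ := exists_surjective_nat κ
    set s : ℕ → Finset κ := fun N => (Finset.range N).image e with hs
    have hmono : Monotone s := fun N K hNK =>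
      Finset.image_subset_image (Finset.range_subset_range.mpr hNK)
    have hten : Filter.Tendsto s Filter.atTop Filter.atTop :=
      Filter.tendsto_atTop_finset_of_monotone hmono (fun x => by
        obtain ⟨N, rfl⟩ := he x
        exact ⟨N + 1, Finset.mem_image.mpr ⟨N, Finset.mem_range.mpr (Nat.lt_succ_self N), rfl⟩⟩)
    have hconv : ∀ᵐ ω ∂μ, Filter.Tendsto (fun N => ∑ x ∈ s N, f x ω) Filter.atTop
        (nhds (∑' x, f x ω)) := by
      filter_upwards [hsum] with ω hω
      exact hω.hasSum.comp hten
    have hpart : ∀ N, eLpNorm (fun ω => ∑ x ∈ s N, f x ω) q μ ≤ ∑' x, eLpNorm (f x) q μ := by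
      intro N
      refine le_trans ?_ (ENNReal.sum_le_tsum (s N))
      have h := eLpNorm_sum_le (f := f) (s := s N) (μ := μ) (fun x _ => hm x) hq
      have hfn : (∑ x ∈ s N, f x) = fun ω => ∑ x ∈ s N, f x ω := by funext ω; simp
      rwa [hfn] at h
    have hle := Lp.eLpNorm_lim_le_liminf_eLpNorm (μ := μ) (p := q)
      (f := fun N ω => ∑ x ∈ s N, f x ω)
      (fun N => Finset.aestronglyMeasurable_fun_sum _ (fun x _ => hm x))
      (fun ω => ∑' x, f x ω) hconv
    refine hle.trans ?_
    calc Filter.atTop.liminf (fun N => eLpNorm (fun ω => ∑ x ∈ s N, f x ω) q μ)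
        ≤ Filter.atTop.liminf (fun _ : ℕ => ∑' x, eLpNorm (f x) q μ) :=
          Filter.liminf_le_liminf (Filter.Eventually.of_forall hpart)
      _ = ∑' x, eLpNorm (f x) q μ := Filter.liminf_const _

/-- Individual Volterra summand. -/
private def volAuxF {Ω : Type*} (a : (i : ℕ) → (Fin (i + 1) → ℕ) → ℝ) (ε : ℤ → Ω → ℝ)
    (k : ℤ) (x : Σ i : ℕ, (Fin (i + 1) → ℕ)) (ω : Ω) : ℝ :=
  if StrictMono x.2 then a x.1 x.2 * ∏ t, ε (k - x.2 t) ω else 0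

/-- Individual coupled Volterra summand. -/
private def volAuxG {Ω : Type*} (a : (i : ℕ) → (Fin (i + 1) → ℕ) → ℝ) (ε ε' : ℤ → Ω → ℝ)
    (k : ℤ) (x : Σ i : ℕ, (Fin (i + 1) → ℕ)) (ω : Ω) : ℝ :=
  if StrictMono x.2 then
    a x.1 x.2 * ∏ t, (if k - (x.2 t : ℤ) ≤ 0 then ε' (k - x.2 t) ω else ε (k - x.2 t) ω) else 0

private lemma volAuxF_apply {Ω : Type*} (a : (i : ℕ) → (Fin (i + 1) → ℕ) → ℝ)
    (ε : ℤ → Ω → ℝ) (k : ℤ) (i : ℕ) (j : Fin (i + 1) → ℕ) :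
    volAuxF a ε k ⟨i, j⟩ = fun ω => if StrictMono j then a i j * ∏ t, ε (k - j t) ω else 0 :=
  rfl

private lemma volAuxG_apply {Ω : Type*} (a : (i : ℕ) → (Fin (i + 1) → ℕ) → ℝ)
    (ε ε' : ℤ → Ω → ℝ) (k : ℤ) (i : ℕ) (j : Fin (i + 1) → ℕ) :
    volAuxG a ε ε' k ⟨i, j⟩ = fun ω => if StrictMono j then
      a i j * ∏ t, (if k - (j t : ℤ) ≤ 0 then ε' (k - j t) ω else ε (k - j t) ω) else 0 :=
  rfl

/-- `‖V_k − V_k^*‖_p ≤ C Σ_i ‖ε_0‖_p^i Σ_{l≥k} A_{l,i}`. -/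
theorem volterra_coupling_bound
    {Ω : Type*} [MeasurableSpace Ω] (μ : Measure Ω) [IsProbabilityMeasure μ]
    (ε ε' : ℤ → Ω → ℝ) (hiid : IIDPair μ ε ε') (p : ℝ) (hp : 3 < p)
    (hmom : eLpNorm (ε 0) (ENNReal.ofReal p) μ < ⊤)
    (a : (i : ℕ) → (Fin (i + 1) → ℕ) → ℝ) :
    ∃ C : ℝ≥0∞, C ≠ ⊤ ∧ ∀ k : ℕ,
      eLpNorm (fun ω => volterra a ε k ω - volterraStar a ε ε' k ω) (ENNReal.ofReal p) μ
        ≤ C * ∑' i : ℕ,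
            (eLpNorm (ε 0) (ENNReal.ofReal p) μ) ^ (i + 1) * ∑' l : ℕ, Avol a (k + l) i := by
  classical
  obtain ⟨hmε, hmε', hindep, hid⟩ := hiid
  have hp0 : (0 : ℝ) < p := by linarith
  set P : ℝ≥0∞ := ENNReal.ofReal p with hPdef
  have hP1 : 1 ≤ P := by
    rw [hPdef, ← ENNReal.ofReal_one]
    exact ENNReal.ofReal_le_ofReal (by linarith)
  set M : ℝ≥0∞ := eLpNorm (ε 0) P μ with hMdef
  have hMne : M ≠ ⊤ := hmom.ne
  have hse : ∀ j, Measurable (Sum.elim ε ε' j) := by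
    intro j; cases j with
    | inl z => exact hmε z
    | inr z => exact hmε' z
  refine ⟨2, by norm_num, fun k => ?_⟩
  set S : ℝ≥0∞ := ∑' i : ℕ, M ^ (i + 1) * ∑' l : ℕ, Avol a (k + l) i with hSdef
  by_cases hSfin : S = ⊤
  · rw [hSfin, ENNReal.mul_top (by norm_num)]; exact le_top
  set F := volAuxF a ε (k : ℤ) with hFdef
  set G := volAuxG a ε ε' (k : ℤ) with hGdef
  set c : (Σ i : ℕ, (Fin (i + 1) → ℕ)) → ℝ≥0∞ :=
    fun x => ENNReal.ofReal |a x.1 x.2| * M ^ (x.1 + 1) with hcdef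
  have hFmeas : ∀ x, Measurable (F x) := by
    rintro ⟨i, j⟩
    by_cases hsm : StrictMono j
    · simp only [hFdef, volAuxF_apply, hsm, if_true]
      exact (Finset.measurable_prod _ fun t _ => hmε _).const_mul _
    · simp only [hFdef, volAuxF_apply, hsm, if_false]; exact measurable_const
  have hGmeas : ∀ x, Measurable (G x) := by
    rintro ⟨i, j⟩
    by_cases hsm : StrictMono j
    · simp only [hGdef, volAuxG_apply, hsm, if_true]
      refine (Finset.measurable_prod _ fun t _ => ?_).const_mul _
      by_cases hc : (k : ℤ) - (j t : ℤ) ≤ 0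
      · simp only [hc, if_true]; exact hmε' _
      · simp only [hc, if_false]; exact hmε _
    · simp only [hGdef, volAuxG_apply, hsm, if_false]; exact measurable_const
  -- norm bounds for individual terms
  have hFle : ∀ x, eLpNorm (F x) P μ ≤ if StrictMono x.2 then c x else 0 := by
    rintro ⟨i, j⟩
    by_cases hsm : StrictMono j
    · simp only [hFdef, volAuxF_apply, hsm, if_true, hcdef]
      have hfun : (fun ω => a i j * ∏ t, ε ((k : ℤ) - j t) ω)
          = a i j • fun ω => ∏ t, Sum.elim ε ε' (Sum.inl ((k : ℤ) - j t)) ω := by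
        funext ω; simp [Sum.elim_inl]
      rw [hfun, eLpNorm_const_smul]
      have hinj : Function.Injective
          (fun t : Fin (i + 1) => (Sum.inl ((k : ℤ) - j t) : ℤ ⊕ ℤ)) := by
        intro t s hts
        have h1 : (k : ℤ) - j t = (k : ℤ) - j s := Sum.inl.inj hts
        have h2 : (j t : ℤ) = (j s : ℤ) := by omega
        exact hsm.injective (by exact_mod_cast h2)
      rw [hPdef, eLpNorm_prod_coords (Sum.elim ε ε') hindep hse hid hp0 _ hinj,
        Real.enorm_eq_ofReal_abs]
      have h0 : Sum.elim ε ε' (Sum.inl 0) = ε 0 := rfl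
      rw [h0, ← hPdef, ← hMdef]
    · simp [hFdef, volAuxF_apply, hsm]
  have hGle : ∀ x, eLpNorm (G x) P μ ≤ if StrictMono x.2 then c x else 0 := by
    rintro ⟨i, j⟩
    by_cases hsm : StrictMono j
    · simp only [hGdef, volAuxG_apply, hsm, if_true, hcdef]
      set m : Fin (i + 1) → ℤ ⊕ ℤ := fun t =>
        if (k : ℤ) - (j t : ℤ) ≤ 0 then Sum.inr ((k : ℤ) - j t) else Sum.inl ((k : ℤ) - j t)
        with hmdef
      have hfun : (fun ω => a i j * ∏ t, (if (k : ℤ) - (j t : ℤ) ≤ 0 then ε' ((k : ℤ) - j t) ω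
            else ε ((k : ℤ) - j t) ω))
          = a i j • fun ω => ∏ t, Sum.elim ε ε' (m t) ω := by
        funext ω
        simp only [Pi.smul_apply, smul_eq_mul]
        congr 1
        refine Finset.prod_congr rfl fun t _ => ?_
        by_cases hc : (k : ℤ) - (j t : ℤ) ≤ 0
        · have hc' : k ≤ j t := by omega
          simp [hmdef, hc, hc']
        · have hc' : ¬ k ≤ j t := by omega
          simp [hmdef, hc, hc']
      rw [hfun, eLpNorm_const_smul]
      have hinj : Function.Injective m := by
        intro t s hts
        have hj : (j t : ℤ) = (j s : ℤ) → t = s := fun h =>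
          hsm.injective (by exact_mod_cast h)
        by_cases hct : (k : ℤ) - (j t : ℤ) ≤ 0 <;> by_cases hcs : (k : ℤ) - (j s : ℤ) ≤ 0
        · simp only [hmdef, hct, hcs, if_true] at hts
          have := Sum.inr.inj hts; exact hj (by omega)
        · simp only [hmdef, hct, hcs, if_true, if_false] at hts
          exact absurd hts (by simp)
        · simp only [hmdef, hct, hcs, if_true, if_false] at hts
          exact absurd hts (by simp)
        · simp only [hmdef, hct, hcs, if_false] at hts
          have := Sum.inl.inj hts; exact hj (by omega)
      rw [hPdef, eLpNorm_prod_coords (Sum.elim ε ε') hindep hse hid hp0 _ hinj,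
        Real.enorm_eq_ofReal_abs]
      have h0 : Sum.elim ε ε' (Sum.inl 0) = ε 0 := rfl
      rw [h0, ← hPdef, ← hMdef]
    · simp [hGdef, volAuxG_apply, hsm]
  -- combinatorial bound
  have hAvol : ∀ i : ℕ,
      (∑' j : Fin (i + 1) → ℕ, if StrictMono j ∧ ∃ t, k ≤ j t
        then ENNReal.ofReal |a i j| else 0) ≤ ∑' l : ℕ, Avol a (k + l) i := by
    intro i
    have hswap : (∑' l : ℕ, Avol a (k + l) i)
        = ∑' j : Fin (i + 1) → ℕ, ∑' l : ℕ,
            (if StrictMono j ∧ ∃ t, j t = k + l then ENNReal.ofReal |a i j| else 0) := by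
      simp only [Avol]
      exact ENNReal.tsum_comm
    rw [hswap]
    refine ENNReal.tsum_le_tsum fun j => ?_
    by_cases hc2 : StrictMono j ∧ ∃ t, k ≤ j t
    · obtain ⟨hsm, t0, ht0⟩ := hc2
      rw [if_pos ⟨hsm, t0, ht0⟩]
      refine le_trans (le_of_eq ?_) (ENNReal.le_tsum (j t0 - k))
      rw [if_pos ⟨hsm, ⟨t0, by omega⟩⟩]
    · rw [if_neg hc2]; exact zero_le
  have hBt : (∑' x : Σ i : ℕ, (Fin (i + 1) → ℕ),
      (if StrictMono x.2 ∧ ∃ t, k ≤ x.2 t then c x else 0)) ≤ S := by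
    rw [ENNReal.tsum_sigma', hSdef]
    refine ENNReal.tsum_le_tsum fun i => ?_
    have hrw : ∀ j : Fin (i + 1) → ℕ,
        (if StrictMono j ∧ ∃ t, k ≤ j t then c ⟨i, j⟩ else 0)
          = M ^ (i + 1) * (if StrictMono j ∧ ∃ t, k ≤ j t
            then ENNReal.ofReal |a i j| else 0) := by
      intro j
      by_cases hc2 : StrictMono j ∧ ∃ t, k ≤ j t
      · simp [hcdef, hc2, mul_comm]
      · simp [hc2]
    simp only [hrw]
    rw [ENNReal.tsum_mul_left]
    exact mul_le_mul_right (hAvol i) _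
  -- finiteness of the total bound
  have hBfin : (∑' x : Σ i : ℕ, (Fin (i + 1) → ℕ),
      (if StrictMono x.2 then c x else 0)) ≠ ⊤ := by
    have hBsplit : ∀ x : Σ i : ℕ, (Fin (i + 1) → ℕ),
        (if StrictMono x.2 then c x else 0)
          = (if StrictMono x.2 ∧ ∀ t, x.2 t < k then c x else 0)
            + (if StrictMono x.2 ∧ ∃ t, k ≤ x.2 t then c x else 0) := by
      rintro ⟨i, j⟩
      dsimp only
      by_cases hsm : StrictMono j
      · by_cases hall : ∀ t, j t < k
        · rw [if_pos hsm, if_pos ⟨hsm, hall⟩, if_neg, add_zero]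
          rintro ⟨-, t, ht⟩; exact absurd (hall t) (by omega)
        · push_neg at hall
          obtain ⟨t0, ht0⟩ := hall
          rw [if_pos hsm, if_neg, if_pos ⟨hsm, t0, by omega⟩, zero_add]
          rintro ⟨-, h2⟩; exact absurd (h2 t0) (by omega)
      · simp [hsm]
    have hcne : ∀ x : Σ i : ℕ, (Fin (i + 1) → ℕ), c x ≠ ⊤ := fun x =>
      ENNReal.mul_ne_top ENNReal.ofReal_ne_top (ENNReal.pow_ne_top hMne)
    have hhead : ∀ x : Σ i : ℕ, (Fin (i + 1) → ℕ),
        x ∉ ((Finset.range k).sigma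
          (fun i => Fintype.piFinset (fun _ : Fin (i + 1) => Finset.range k))) →
        (if StrictMono x.2 ∧ ∀ t, x.2 t < k then c x else 0) = 0 := by
      rintro ⟨i, j⟩ hx
      dsimp only
      rw [if_neg]
      rintro ⟨hsm, hall⟩
      apply hx
      refine Finset.mem_sigma.mpr ⟨Finset.mem_range.mpr ?_,
        Fintype.mem_piFinset.mpr fun t => Finset.mem_range.mpr (hall t)⟩
      show i < k
      have h1 := fin_strictMono_le hsm (Fin.last i)
      have h2 : ((Fin.last i : Fin (i + 1)) : ℕ) = i := rfl
      have h3 := hall (Fin.last i)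
      omega
    simp only [hBsplit]
    rw [ENNReal.tsum_add]
    refine ENNReal.add_ne_top.mpr ⟨?_, ne_top_of_le_ne_top hSfin hBt⟩
    rw [tsum_eq_sum hhead]
    refine (ENNReal.sum_lt_top.mpr fun x _ => ?_).ne
    split
    · exact (hcne x).lt_top
    · exact ENNReal.zero_lt_top
  -- a.e. summability
  have hsumF : ∀ᵐ ω ∂μ, Summable fun x => F x ω := by
    have hF1 : ∀ x, ∫⁻ ω, (‖F x ω‖₊ : ℝ≥0∞) ∂μ ≤ (if StrictMono x.2 then c x else 0) := by
      intro x
      change ∫⁻ ω, ‖F x ω‖ₑ ∂μ ≤ _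
      rw [← eLpNorm_one_eq_lintegral_enorm]
      exact le_trans (eLpNorm_le_eLpNorm_of_exponent_le hP1
        (hFmeas x).aestronglyMeasurable) (hFle x)
    have hlt : ∫⁻ ω, ∑' x, (‖F x ω‖₊ : ℝ≥0∞) ∂μ < ⊤ := by
      rw [lintegral_tsum (fun x => (hFmeas x).nnnorm.coe_nnreal_ennreal.aemeasurable)]
      exact lt_of_le_of_lt (ENNReal.tsum_le_tsum hF1) (lt_top_iff_ne_top.mpr hBfin)
    filter_upwards [ae_lt_top (Measurable.ennreal_tsum fun x => (hFmeas x).nnnorm.coe_nnreal_ennreal) hlt.ne]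
      with ω hω
    exact Summable.of_nnnorm (ENNReal.tsum_coe_ne_top_iff_summable.mp hω.ne)
  have hsumG : ∀ᵐ ω ∂μ, Summable fun x => G x ω := by
    have hG1 : ∀ x, ∫⁻ ω, (‖G x ω‖₊ : ℝ≥0∞) ∂μ ≤ (if StrictMono x.2 then c x else 0) := by
      intro x
      change ∫⁻ ω, ‖G x ω‖ₑ ∂μ ≤ _
      rw [← eLpNorm_one_eq_lintegral_enorm]
      exact le_trans (eLpNorm_le_eLpNorm_of_exponent_le hP1
        (hGmeas x).aestronglyMeasurable) (hGle x)
    have hlt : ∫⁻ ω, ∑' x, (‖G x ω‖₊ : ℝ≥0∞) ∂μ < ⊤ := by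
      rw [lintegral_tsum (fun x => (hGmeas x).nnnorm.coe_nnreal_ennreal.aemeasurable)]
      exact lt_of_le_of_lt (ENNReal.tsum_le_tsum hG1) (lt_top_iff_ne_top.mpr hBfin)
    filter_upwards [ae_lt_top (Measurable.ennreal_tsum fun x => (hGmeas x).nnnorm.coe_nnreal_ennreal) hlt.ne]
      with ω hω
    exact Summable.of_nnnorm (ENNReal.tsum_coe_ne_top_iff_summable.mp hω.ne)
  -- a.e. identification of the difference
  have hae : (fun ω => volterra a ε (k : ℤ) ω - volterraStar a ε ε' (k : ℤ) ω)
      =ᵐ[μ] fun ω => ∑' x : Σ i : ℕ, (Fin (i + 1) → ℕ), (F x ω - G x ω) := by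
    filter_upwards [hsumF, hsumG] with ω hFs hGs
    have h1 : volterra a ε (k : ℤ) ω = ∑' x, F x ω := (hFs.tsum_sigma).symm
    have h2 : volterraStar a ε ε' (k : ℤ) ω = ∑' x, G x ω := (hGs.tsum_sigma).symm
    rw [h1, h2, ← Summable.tsum_sub hFs hGs]
  -- per-term difference bound
  have hdiff : ∀ x : Σ i : ℕ, (Fin (i + 1) → ℕ),
      eLpNorm (fun ω => F x ω - G x ω) P μ
        ≤ 2 * (if StrictMono x.2 ∧ ∃ t, k ≤ x.2 t then c x else 0) := by
    rintro ⟨i, j⟩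
    by_cases hc2 : StrictMono j ∧ ∃ t, k ≤ j t
    · rw [if_pos hc2, two_mul]
      refine le_trans (eLpNorm_sub_le (hFmeas _).aestronglyMeasurable
        (hGmeas _).aestronglyMeasurable hP1) ?_
      refine add_le_add (le_trans (hFle ⟨i, j⟩) ?_) (le_trans (hGle ⟨i, j⟩) ?_) <;>
        rw [if_pos hc2.1]
    · have hzero : (fun ω => F ⟨i, j⟩ ω - G ⟨i, j⟩ ω) = fun _ => (0 : ℝ) := by
        funext ω
        by_cases hsm : StrictMono j
        · have hall : ∀ t, j t < k := by
            intro t; by_contra hge; exact hc2 ⟨hsm, t, by omega⟩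
          simp only [hFdef, hGdef, volAuxF_apply, volAuxG_apply, hsm, if_true]
          rw [sub_eq_zero]
          congr 1
          refine Finset.prod_congr rfl fun t _ => ?_
          rw [if_neg]
          have := hall t; omega
        · simp [hFdef, hGdef, volAuxF_apply, volAuxG_apply, hsm]
      rw [hzero]
      simp
  -- conclusion
  rw [eLpNorm_congr_ae hae]
  refine le_trans (eLpNorm_tsum_le_tsum_eLpNorm hP1 _
    (fun x => ((hFmeas x).sub (hGmeas x)).aestronglyMeasurable)
    (by filter_upwards [hsumF, hsumG] with ω h1 h2; exact h1.sub h2)) ?_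
  calc (∑' x : Σ i : ℕ, (Fin (i + 1) → ℕ), eLpNorm (fun ω => F x ω - G x ω) P μ)
      ≤ ∑' x : Σ i : ℕ, (Fin (i + 1) → ℕ),
          2 * (if StrictMono x.2 ∧ ∃ t, k ≤ x.2 t then c x else 0) :=
        ENNReal.tsum_le_tsum hdiff
    _ = 2 * ∑' x : Σ i : ℕ, (Fin (i + 1) → ℕ),
          (if StrictMono x.2 ∧ ∃ t, k ≤ x.2 t then c x else 0) := ENNReal.tsum_mul_left
    _ ≤ 2 * S := mul_le_mul_right hBt 2

end
end
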